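/- arXiv:2311.15487 — 3 statements merged into one kernel-verified Lean document; each statement's English description precedes it below -/
import Mathlib

section
/- Suppose Z : ℝ → ℝ^K is differentiable and solves ∂_s Z(s) = -Pen[D[Z(s)]] ∇_x C[x[Z(s)]], where x : ℝ^K → ℝ^n is differentiable with Jacobian D[Z] of maximal rank n ≤ K along the orbit, and Pen[D] = Dᵀ(D Dᵀ)⁻¹. Then the curve u(s) := x[Z(s)] satisfies ∂_s u(s) = -∇C[u(s)]. -/
open Matrix

theorem overparam_flow_pushforward
    (n K : ℕ) (hnK : n ≤ K)
    (x : EuclideanSpace ℝ (Fin K) → EuclideanSpace ℝ (Fin n))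
    (C : EuclideanSpace ℝ (Fin n) → ℝ)
    (D : EuclideanSpace ℝ (Fin K) → Matrix (Fin n) (Fin K) ℝ)
    (hx : ∀ W, HasFDerivAt x (LinearMap.toContinuousLinearMap (Matrix.toEuclideanLin (D W))) W)
    (Z : ℝ → EuclideanSpace ℝ (Fin K))
    (hrank : ∀ s : ℝ, (D (Z s)).rank = n)
    (hode : ∀ s : ℝ, HasDerivAt Z
      (-(Matrix.toEuclideanLin ((D (Z s))ᵀ * (D (Z s) * (D (Z s))ᵀ)⁻¹)
        (gradient C (x (Z s))))) s) :
    ∀ s : ℝ, HasDerivAt (fun t => x (Z t)) (-(gradient C (x (Z s)))) s := by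
  intro s
  set A := D (Z s) with hA
  set g := gradient C (x (Z s)) with hg
  -- A * Aᵀ is invertible
  have hr : (A * Aᵀ).rank = n := by
    rw [Matrix.rank_self_mul_transpose]; exact hrank s
  have htop : LinearMap.range (A * Aᵀ).mulVecLin = ⊤ := by
    apply Submodule.eq_top_of_finrank_eq
    rw [← Matrix.rank, hr]
    simp
  have hsurj : Function.Surjective ((A * Aᵀ).mulVec) := by
    intro v
    obtain ⟨w, hw⟩ := (LinearMap.range_eq_top.mp htop) v
    exact ⟨w, hw⟩
  have hUdet : IsUnit (A * Aᵀ).det :=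
    (Matrix.isUnit_iff_isUnit_det _).mp (Matrix.mulVec_surjective_iff_isUnit.mp hsurj)
  have hkey : A * (Aᵀ * (A * Aᵀ)⁻¹) = 1 := by
    rw [← Matrix.mul_assoc, Matrix.mul_nonsing_inv _ hUdet]
  -- chain rule
  have h := (hx (Z s)).comp_hasDerivAt s (hode s)
  convert h using 1
  case e'_4 => rfl
  case e'_5 => rfl
  case e'_6 => rfl
  case e'_8 => rfl
  rw [LinearMap.coe_toContinuousLinearMap']
  rw [map_neg]
  congr 1
  rw [Matrix.toEuclideanLin_apply, Matrix.toEuclideanLin_apply]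
  simp only [Equiv.apply_symm_apply, Matrix.mulVec_mulVec, hkey, Matrix.one_mulVec]
  rw [← hA, hkey, Matrix.one_mulVec]
end

section
/- Under the modified overparametrized gradient flow ∂_s Z(s) = -Pen[D[Z(s)]]∇_x C[x[Z(s)]] with C[x] = (1/(2N))‖x - y‖² and maximal rank n = dim output ≤ K along the orbit, the cost satisfies C[x[Z(s)]] = e^{-2s/N} C[x[Z(0)]] for all s ≥ 0; in particular C[x[Z(s)]] → 0 as s → ∞. -/
open Matrix

section Helpers

open RealInnerProductSpace

private lemma grad_aux' (n : ℕ) (N : ℝ) (y v : EuclideanSpace ℝ (Fin n)) :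
    HasGradientAt (fun v => (1 / (2 * N)) * ‖v - y‖ ^ 2) ((1 / N) • (v - y)) v := by
  rw [hasGradientAt_iff_hasFDerivAt]
  have h1 : HasFDerivAt (fun v : EuclideanSpace ℝ (Fin n) => v - y)
      (ContinuousLinearMap.id ℝ _) v := (hasFDerivAt_id v).sub_const y
  have h2 := (h1.inner ℝ h1).const_mul (1 / (2 * N))
  have hfun : (fun v : EuclideanSpace ℝ (Fin n) => (1 / (2 * N)) * ‖v - y‖ ^ 2)
      = fun v => (1 / (2 * N)) * ⟪v - y, v - y⟫ := by
    funext w; rw [real_inner_self_eq_norm_sq]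
  rw [hfun]
  refine h2.congr_fderiv ?_
  apply ContinuousLinearMap.ext
  intro w
  simp [real_inner_smul_left, real_inner_comm (v - y) w, mul_sub, sub_mul,
    Finset.sum_sub_distrib]
  rw [inner_sub_left]
  ring

private lemma exp_ode' {f : ℝ → ℝ} {c : ℝ} (hf : ∀ s, HasDerivAt f (-c * f s) s) :
    ∀ s, f s = Real.exp (-c * s) * f 0 := by
  intro s
  have key : ∀ t : ℝ, Real.exp (c * t) * f t = f 0 := by
    intro t
    have hg : ∀ u : ℝ, HasDerivAt (fun t => Real.exp (c * t) * f t) 0 u := by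
      intro u
      have he : HasDerivAt (fun t => Real.exp (c * t)) (c * Real.exp (c * u)) u := by
        have h' := (Real.hasDerivAt_exp (c * u)).comp u ((hasDerivAt_id u).const_mul c)
        simp only [mul_one, id] at h'
        exact h'.congr_deriv (mul_comm _ _)
      have := he.mul (hf u)
      refine this.congr_deriv ?_
      ring
    have hdiff : Differentiable ℝ (fun t => Real.exp (c * t) * f t) :=
      fun u => (hg u).differentiableAt
    have hconst := is_const_of_deriv_eq_zero hdiff (fun u => (hg u).deriv) t 0
    simpa using hconst
  have h := key s
  rw [neg_mul, Real.exp_neg, inv_mul_eq_div, eq_div_iff (Real.exp_ne_zero _), mul_comm]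
  exact h

private lemma isUnit_of_rank_eq_card' {n : ℕ} (M : Matrix (Fin n) (Fin n) ℝ)
    (h : M.rank = n) : IsUnit M := by
  rw [← Matrix.mulVec_surjective_iff_isUnit]
  have hr : LinearMap.range M.mulVecLin = ⊤ := by
    apply Submodule.eq_top_of_finrank_eq
    rw [show Module.finrank ℝ (LinearMap.range M.mulVecLin) = M.rank from rfl, h]
    simp
  intro v
  obtain ⟨w, hw⟩ := LinearMap.range_eq_top.mp hr v
  exact ⟨w, hw⟩

private lemma toEucl_mul' {m n p : ℕ} (A : Matrix (Fin m) (Fin n) ℝ)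
    (B : Matrix (Fin n) (Fin p) ℝ) (v : EuclideanSpace ℝ (Fin p)) :
    Matrix.toEuclideanLin (A * B) v = Matrix.toEuclideanLin A (Matrix.toEuclideanLin B v) := by
  simp [Matrix.toEuclideanLin_apply, Matrix.mulVec_mulVec]

private lemma toEucl_one' {n : ℕ} (v : EuclideanSpace ℝ (Fin n)) :
    Matrix.toEuclideanLin (1 : Matrix (Fin n) (Fin n) ℝ) v = v := by
  simp [Matrix.toEuclideanLin_apply, Matrix.one_mulVec]

end Helpers

theorem overparam_flow_cost_decay
    (n K : ℕ) (hnK : n ≤ K) (N : ℝ) (hN : 0 < N) (y : EuclideanSpace ℝ (Fin n))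
    (C : EuclideanSpace ℝ (Fin n) → ℝ)
    (hC : ∀ v, C v = (1 / (2 * N)) * ‖v - y‖ ^ 2)
    (x : EuclideanSpace ℝ (Fin K) → EuclideanSpace ℝ (Fin n))
    (D : EuclideanSpace ℝ (Fin K) → Matrix (Fin n) (Fin K) ℝ)
    (hx : ∀ W, HasFDerivAt x (LinearMap.toContinuousLinearMap (Matrix.toEuclideanLin (D W))) W)
    (Z : ℝ → EuclideanSpace ℝ (Fin K))
    (hrank : ∀ s : ℝ, (D (Z s)).rank = n)
    (hode : ∀ s : ℝ, HasDerivAt Z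
      (-(Matrix.toEuclideanLin ((D (Z s))ᵀ * (D (Z s) * (D (Z s))ᵀ)⁻¹)
        (gradient C (x (Z s))))) s) :
    (∀ s : ℝ, 0 ≤ s → C (x (Z s)) = Real.exp (-2 * s / N) * C (x (Z 0))) ∧
      Filter.Tendsto (fun s => C (x (Z s))) Filter.atTop (nhds 0) := by
  have hCe : C = fun v => (1 / (2 * N)) * ‖v - y‖ ^ 2 := funext hC
  subst hCe
  set C : EuclideanSpace ℝ (Fin n) → ℝ := fun v => (1 / (2 * N)) * ‖v - y‖ ^ 2 with hCdef
  -- the gradient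
  have hg : ∀ v, HasGradientAt C ((1 / N) • (v - y)) v := fun v => grad_aux' n N y v
  have hgrad : ∀ s, gradient C (x (Z s)) = (1 / N) • (x (Z s) - y) :=
    fun s => (hg (x (Z s))).gradient
  -- the velocity of x ∘ Z is minus the gradient
  have hv : ∀ s, HasDerivAt (fun t => x (Z t))
      (-((1 / N) • (x (Z s) - y))) s := by
    intro s
    have h := (hx (Z s)).comp_hasDerivAt s (hode s)
    refine h.congr_deriv ?_
    have hunit : IsUnit (D (Z s) * (D (Z s))ᵀ) := by
      apply isUnit_of_rank_eq_card'
      rw [Matrix.rank_self_mul_transpose, hrank s]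
    have hmul : D (Z s) * ((D (Z s))ᵀ * (D (Z s) * (D (Z s))ᵀ)⁻¹) = 1 := by
      rw [← Matrix.mul_assoc, Matrix.mul_nonsing_inv _ ((Matrix.isUnit_iff_isUnit_det _).mp hunit)]
    simp only [LinearMap.coe_toContinuousLinearMap', map_neg, ← toEucl_mul', hmul,
      toEucl_one', hgrad s]
  -- the derivative of the cost
  have hf : ∀ s, HasDerivAt (fun t => C (x (Z t))) (-(2 / N) * C (x (Z s))) s := by
    intro s
    have hF := (hg (x (Z s))).hasFDerivAt.comp_hasDerivAt s (hv s)
    refine hF.congr_deriv ?_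
    rw [InnerProductSpace.toDual_apply_apply]
    rw [inner_neg_right, real_inner_smul_left, real_inner_smul_right,
      real_inner_self_eq_norm_sq]
    simp only [hCdef]
    field_simp
  have key := exp_ode' hf
  constructor
  · intro s _
    rw [key s]
    congr 1
    ring_nf
  · have hfun : (fun s => C (x (Z s))) = fun s => Real.exp (-(2 / N) * s) * C (x (Z 0)) :=
      funext key
    rw [hfun]
    have hneg : -(2 / N) < 0 := neg_neg_iff_pos.mpr (by positivity)
    have h1 : Filter.Tendsto (fun s : ℝ => -(2 / N) * s) Filter.atTop Filter.atBot :=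
      (Filter.tendsto_const_mul_atBot_of_neg hneg).mpr Filter.tendsto_id
    have h2 : Filter.Tendsto (fun s : ℝ => Real.exp (-(2 / N) * s)) Filter.atTop (nhds 0) :=
      Real.tendsto_exp_atBot.comp h1
    simpa using h2.mul_const (C (x (Z 0)))
end

section
/- If Z* is a critical point of the underparametrized modified gradient flow (i.e., (DᵀD)⁻¹Dᵀ∇C[x[Z*]] = 0 with rank D[Z*] = K), then 𝒫[Z*]∇_x C[x[Z*]] = 0, and consequently C[x[Z*]] = (N/2)‖(1 - 𝒫[Z*])∇_x C[x[Z*]]‖², where C[x] = (1/(2N))‖x - y‖². -/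
open Matrix

lemma gradC_eq (n : ℕ) (N : ℝ) (hN : 0 < N)
    (y pt : EuclideanSpace ℝ (Fin n))
    (C : EuclideanSpace ℝ (Fin n) → ℝ)
    (hC : ∀ v, C v = (1 / (2 * N)) * ‖v - y‖ ^ 2) :
    gradient C pt = (1 / N) • (pt - y) := by
  have hf : HasFDerivAt (fun v : EuclideanSpace ℝ (Fin n) => v - y)
      (ContinuousLinearMap.id ℝ _) pt := by
    simpa using (hasFDerivAt_id pt).sub_const y
  have h1 := hf.norm_sq
  have h2 : HasFDerivAt C ((1 / (2 * N)) • ((2 : ℕ) • (innerSL ℝ (pt - y)))) pt := by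
    have := h1.const_smul (1 / (2 * N))
    refine this.congr_of_eventuallyEq ?_
    filter_upwards with v
    rw [hC v, Pi.smul_apply, smul_eq_mul]
  have hgrad : HasGradientAt C ((1 / N) • (pt - y)) pt := by
    rw [hasGradientAt_iff_hasFDerivAt]
    refine h2.congr_fderiv ?_
    ext w
    simp only [InnerProductSpace.toDual_apply_apply, ContinuousLinearMap.smul_apply, innerSL_apply_apply,
      smul_eq_mul, real_inner_smul_left, ← Nat.cast_smul_eq_nsmul ℝ, Nat.cast_ofNat]
    ring
  exact hgrad.gradient

theorem underparam_critical_point_cost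
    (n K : ℕ) (hKn : K < n) (N : ℝ) (hN : 0 < N)
    (y pt : EuclideanSpace ℝ (Fin n))
    (C : EuclideanSpace ℝ (Fin n) → ℝ)
    (hC : ∀ v, C v = (1 / (2 * N)) * ‖v - y‖ ^ 2)
    (D : Matrix (Fin n) (Fin K) ℝ) (hrank : D.rank = K)
    (hcrit : Matrix.toEuclideanLin ((Dᵀ * D)⁻¹ * Dᵀ) (gradient C pt) = 0) :
    Matrix.toEuclideanLin (D * (Dᵀ * D)⁻¹ * Dᵀ) (gradient C pt) = 0 ∧
      C pt = (N / 2) *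
        ‖Matrix.toEuclideanLin (1 - D * (Dᵀ * D)⁻¹ * Dᵀ) (gradient C pt)‖ ^ 2 := by
  set g := gradient C pt with hg
  have hzero : Matrix.toEuclideanLin (D * (Dᵀ * D)⁻¹ * Dᵀ) g = 0 := by
    have := hcrit
    rw [Matrix.toEuclideanLin_apply] at this ⊢
    have hv : ((Dᵀ * D)⁻¹ * Dᵀ) *ᵥ (WithLp.equiv 2 (Fin n → ℝ)) g = 0 := by
      have := congrArg (WithLp.equiv 2 (Fin K → ℝ)) this
      simpa using this
    rw [Matrix.mul_assoc, ← Matrix.mulVec_mulVec, (by simpa using hv : ((Dᵀ * D)⁻¹ * Dᵀ) *ᵥ g.ofLp = 0)]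
    simp
  refine ⟨hzero, ?_⟩
  have hone : Matrix.toEuclideanLin (1 - D * (Dᵀ * D)⁻¹ * Dᵀ) g = g := by
    rw [map_sub]
    simp only [LinearMap.sub_apply, hzero, sub_zero]
    rw [Matrix.toEuclideanLin_apply]
    simp
  rw [hone, hg, gradC_eq n N hN y pt C hC, hC pt, norm_smul]
  rw [mul_pow]
  have : ‖(1 / N)‖ ^ 2 = 1 / N ^ 2 := by
    rw [Real.norm_eq_abs, sq_abs]; ring
  rw [this]
  field_simp
end
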